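/- Let μ be a finite measure on (Ω, Σ), ν a probability measure on ℝⁿ, and (s,x) ↦ f_s(x) jointly measurable with s ↦ log(∫ e^{−f_s} dν) μ-integrable. For every ε > 0 there exists a continuous function ψ : ℝⁿ → ℝ with 0 ≤ ψ(x) ≤ |x|², ψ(x) → +∞ as |x| → ∞, such that ∫_Ω −log(∫ e^{−f_s(x)−ψ(x)} dν(x)) dμ(s) ≤ ∫_Ω −log(∫ e^{−f_s} dν) dμ(s) + ε. -/

import Mathlib

open MeasureTheory ENNReal Filter Set

noncomputable def expNeg (y : EReal) : ℝ≥0∞ :=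
  if y = ⊤ then 0 else ENNReal.ofReal (Real.exp (-y.toReal))

noncomputable def erealPos (y : EReal) : ℝ≥0∞ :=
  if y = ⊤ then ⊤ else ENNReal.ofReal y.toReal

/-- `∫ F dμ = ∫ F⁺ dμ − ∫ F⁻ dμ` for an `EReal`-valued function. -/
noncomputable def eInt {Ω : Type*} [MeasurableSpace Ω] (μ : Measure Ω) (F : Ω → EReal) :
    EReal :=
  ((∫⁻ s, erealPos (F s) ∂μ : ℝ≥0∞) : EReal) - ((∫⁻ s, erealPos (-(F s)) ∂μ : ℝ≥0∞) : EReal)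

section Aux

lemma msTop : MeasurableSet {y : EReal | y = ⊤} := by
  simp only [Set.setOf_eq_eq_singleton]
  exact measurableSet_singleton _

lemma measurable_expNeg : Measurable expNeg := by
  unfold expNeg
  exact Measurable.ite msTop measurable_const
    (ENNReal.measurable_ofReal.comp (Real.measurable_exp.comp measurable_ereal_toReal.neg))

lemma measurable_erealPos : Measurable erealPos := by
  unfold erealPos
  exact Measurable.ite msTop measurable_const
    (ENNReal.measurable_ofReal.comp measurable_ereal_toReal)

lemma measurable_ennreal_log : Measurable ENNReal.log := by
  unfold ENNReal.log
  refine Measurable.ite ?_ measurable_const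
    (Measurable.ite ?_ measurable_const
      (measurable_coe_real_ereal.comp (Real.measurable_log.comp ENNReal.measurable_toReal)))
  · simp only [Set.setOf_eq_eq_singleton]; exact measurableSet_singleton _
  · simp only [Set.setOf_eq_eq_singleton]; exact measurableSet_singleton _

lemma measurable_ereal_neg : Measurable (fun y : EReal => -y) := by
  apply EReal.measurable_of_measurable_real (f := fun y : EReal => -y)
  simp_rw [← EReal.coe_neg]
  exact measurable_coe_real_ereal.comp measurable_neg

lemma expNeg_coe (t : ℝ) : expNeg (t : EReal) = ENNReal.ofReal (Real.exp (-t)) := by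
  simp [expNeg]

lemma expNeg_bot : expNeg ⊥ = 1 := by simp [expNeg]

lemma expNeg_top : expNeg ⊤ = 0 := by simp [expNeg]

lemma erealPos_coe (t : ℝ) : erealPos (t : EReal) = ENNReal.ofReal t := by
  simp [erealPos]

lemma expNeg_add_real (y : EReal) (c : ℝ) :
    expNeg (y + (c : EReal)) =
      if y = ⊤ then 0 else if y = ⊥ then 1 else ENNReal.ofReal (Real.exp (-(y.toReal + c))) := by
  induction y using EReal.rec with
  | top => simp [expNeg]
  | bot =>
      have h : (⊥ : EReal) + c = ⊥ := by simp
      rw [h, expNeg_bot]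
      norm_num
  | coe t =>
      have h1 : (t : EReal) + c = ((t + c : ℝ) : EReal) := by norm_cast
      rw [h1, expNeg_coe, if_neg (by simp), if_neg (by simp), EReal.toReal_coe]

lemma expNeg_anti_add {y : EReal} {c : ℝ} (hc : 0 ≤ c) : expNeg (y + (c : EReal)) ≤ expNeg y := by
  rw [expNeg_add_real]
  induction y using EReal.rec with
  | top => simp
  | bot => simp [expNeg_bot]
  | coe t =>
      rw [if_neg (by simp), if_neg (by simp), expNeg_coe, EReal.toReal_coe]
      exact ENNReal.ofReal_le_ofReal (Real.exp_le_exp.2 (by linarith))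

lemma le_expNeg_add {y : EReal} {c d : ℝ} (hc : 0 ≤ c) (hcd : c ≤ d) :
    ENNReal.ofReal (Real.exp (-d)) * expNeg y ≤ expNeg (y + (c : EReal)) := by
  rw [expNeg_add_real]
  induction y using EReal.rec with
  | top => simp [expNeg_top]
  | bot =>
      rw [if_neg (by simp), if_pos rfl, expNeg_bot, mul_one]
      calc ENNReal.ofReal (Real.exp (-d)) ≤ ENNReal.ofReal 1 :=
            ENNReal.ofReal_le_ofReal (Real.exp_le_one_iff.2 (by linarith))
        _ = 1 := ENNReal.ofReal_one
  | coe t =>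
      rw [if_neg (by simp), if_neg (by simp), expNeg_coe, EReal.toReal_coe,
        ← ENNReal.ofReal_mul (by positivity), ← Real.exp_add]
      exact ENNReal.ofReal_le_ofReal (Real.exp_le_exp.2 (by linarith))

noncomputable def stepF (ρ : ℕ → ℕ) (m : ℕ) (r : ℝ) : ℝ := min 1 (max 0 (r - ρ m))

noncomputable def stair (ρ : ℕ → ℕ) (r : ℝ) : ℝ := ∑' m, stepF ρ m r

variable {ρ : ℕ → ℕ} (hρ1 : ∀ m, m + 1 ≤ ρ m) (hρ2 : Monotone ρ)

lemma stepF_nonneg (m : ℕ) (r : ℝ) : 0 ≤ stepF ρ m r := le_min one_pos.le (le_max_left _ _)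

lemma stepF_le_one (m : ℕ) (r : ℝ) : stepF ρ m r ≤ 1 := min_le_left _ _

lemma stepF_mono (m : ℕ) : Monotone (stepF ρ m) := fun r r' h => by
  unfold stepF; gcongr

lemma stepF_continuous (m : ℕ) : Continuous (stepF ρ m) := by
  unfold stepF; fun_prop

lemma stepF_eq_zero {m : ℕ} {r : ℝ} (h : r ≤ ρ m) : stepF ρ m r = 0 := by
  unfold stepF
  rw [max_eq_left (by linarith), min_eq_right (by norm_num)]

lemma stepF_eq_one {m : ℕ} {r : ℝ} (h : (ρ m : ℝ) + 1 ≤ r) : stepF ρ m r = 1 := by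
  unfold stepF
  rw [max_eq_right (by linarith), min_eq_left (by linarith)]

include hρ1 in
lemma stair_eq_sum {r : ℝ} {N : ℕ} (h : r ≤ N) :
    stair ρ r = ∑ m ∈ Finset.range N, stepF ρ m r := by
  refine tsum_eq_sum (fun m hm => ?_)
  rw [Finset.mem_range, not_lt] at hm
  refine stepF_eq_zero (le_trans h ?_)
  have := hρ1 m
  exact_mod_cast le_trans (by exact_mod_cast hm) (by omega : m ≤ ρ m)

include hρ1 in
lemma stair_nonneg (r : ℝ) : 0 ≤ stair ρ r := by
  rw [stair_eq_sum hρ1 (Nat.le_ceil r)]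
  exact Finset.sum_nonneg fun m _ => stepF_nonneg m r

omit hρ1 in
include hρ2 in
lemma stair_le {m : ℕ} {r : ℝ} (h : r ≤ ρ m) : stair ρ r ≤ m := by
  have : stair ρ r = ∑ m' ∈ Finset.range m, stepF ρ m' r := by
    refine tsum_eq_sum (fun m' hm' => ?_)
    rw [Finset.mem_range, not_lt] at hm'
    exact stepF_eq_zero (le_trans h (by exact_mod_cast hρ2 hm'))
  rw [this]
  calc ∑ m' ∈ Finset.range m, stepF ρ m' r ≤ ∑ m' ∈ Finset.range m, 1 :=
        Finset.sum_le_sum fun m' _ => stepF_le_one m' r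
    _ = m := by simp

include hρ1 in
lemma stair_le_ceil (r : ℝ) : stair ρ r ≤ ⌈r⌉₊ := by
  rw [stair_eq_sum hρ1 (Nat.le_ceil r)]
  calc ∑ m' ∈ Finset.range ⌈r⌉₊, stepF ρ m' r ≤ ∑ m' ∈ Finset.range ⌈r⌉₊, 1 :=
        Finset.sum_le_sum fun m' _ => stepF_le_one m' r
    _ = ⌈r⌉₊ := by simp

include hρ1 hρ2 in
lemma stair_ge {m : ℕ} {r : ℝ} (h : (ρ m : ℝ) + 1 ≤ r) : (m : ℝ) + 1 ≤ stair ρ r := by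
  have hN : r ≤ (⌈r⌉₊ : ℝ) := Nat.le_ceil r
  rw [stair_eq_sum hρ1 hN]
  have hsub : Finset.range (m + 1) ⊆ Finset.range ⌈r⌉₊ := by
    apply Finset.range_subset_range.2
    have h2 : ((m : ℝ) + 2) ≤ r := by
      have := hρ1 m
      have : ((m : ℝ)) + 1 ≤ (ρ m : ℝ) := by exact_mod_cast this
      linarith
    have h3 : ((m : ℝ) + 2) ≤ ⌈r⌉₊ := le_trans h2 hN
    have : (m + 2 : ℕ) ≤ ⌈r⌉₊ := by exact_mod_cast h3
    omega
  calc ((m : ℝ) + 1) = ∑ m' ∈ Finset.range (m + 1), (1 : ℝ) := by simp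
    _ = ∑ m' ∈ Finset.range (m + 1), stepF ρ m' r := by
        refine Finset.sum_congr rfl fun m' hm' => ?_
        rw [Finset.mem_range] at hm'
        refine (stepF_eq_one ?_).symm
        have : (ρ m' : ℝ) ≤ ρ m := by exact_mod_cast hρ2 (by omega : m' ≤ m)
        linarith
    _ ≤ ∑ m' ∈ Finset.range ⌈r⌉₊, stepF ρ m' r :=
        Finset.sum_le_sum_of_subset_of_nonneg hsub fun m' _ _ => stepF_nonneg m' r

include hρ1 in
lemma stair_mono : Monotone (stair ρ) := by
  intro r r' h
  have hN : r ≤ (⌈max r r'⌉₊ : ℝ) := le_trans (le_max_left _ _) (Nat.le_ceil _)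
  have hN' : r' ≤ (⌈max r r'⌉₊ : ℝ) := le_trans (le_max_right _ _) (Nat.le_ceil _)
  rw [stair_eq_sum hρ1 hN, stair_eq_sum hρ1 hN']
  exact Finset.sum_le_sum fun m _ => stepF_mono m h

include hρ1 in
lemma stair_continuous : Continuous (stair ρ) := by
  rw [continuous_iff_continuousAt]
  intro r
  have hrN : r < (⌈r⌉₊ + 1 : ℕ) :=
    lt_of_le_of_lt (Nat.le_ceil r) (by exact_mod_cast Nat.lt_succ_self _)
  have hcont : ContinuousAt (fun r' => ∑ m ∈ Finset.range (⌈r⌉₊ + 1), stepF ρ m r') r :=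
    (continuous_finset_sum _ fun m _ => stepF_continuous m).continuousAt
  refine hcont.congr ?_
  filter_upwards [Iio_mem_nhds hrN] with r' hr'
  exact (stair_eq_sum hρ1 (le_of_lt hr')).symm

include hρ1 hρ2 in
lemma stair_tendsto : Tendsto (stair ρ) atTop atTop := by
  refine tendsto_atTop_atTop_of_monotone (stair_mono hρ1) (fun b => ?_)
  obtain ⟨m, hm⟩ := exists_nat_ge b
  refine ⟨(ρ m : ℝ) + 1, ?_⟩
  have := stair_ge hρ1 hρ2 (le_refl ((ρ m : ℝ) + 1))
  linarith

end Aux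

/-- Adding a coercive penalty `ψ` with `0 ≤ ψ(x) ≤ |x|²` changes
`∫ −log(∫ e^{−f_s} dν) dμ(s)` by at most `ε`. -/
theorem adding_psi {Ω : Type*} [MeasurableSpace Ω] (μ : Measure Ω) [IsFiniteMeasure μ]
    (n : ℕ) (ν : Measure (EuclideanSpace ℝ (Fin n))) [IsProbabilityMeasure ν]
    (f : Ω → EuclideanSpace ℝ (Fin n) → EReal)
    (hf : Measurable (Function.uncurry f))
    (hfin : ∀ᵐ s ∂μ, ENNReal.log (∫⁻ x, expNeg (f s x) ∂ν) ≠ ⊤ ∧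
      ENNReal.log (∫⁻ x, expNeg (f s x) ∂ν) ≠ ⊥)
    (hint : Integrable (fun s => (ENNReal.log (∫⁻ x, expNeg (f s x) ∂ν)).toReal) μ)
    (ε : ℝ) (hε : 0 < ε) :
    ∃ ψ : EuclideanSpace ℝ (Fin n) → ℝ, Continuous ψ ∧
      (∀ x, 0 ≤ ψ x) ∧ (∀ x, ψ x ≤ ‖x‖ ^ 2) ∧
      Tendsto ψ (cocompact (EuclideanSpace ℝ (Fin n))) atTop ∧
      eInt μ (fun s => -(ENNReal.log (∫⁻ x, expNeg (f s x + (ψ x : ℝ)) ∂ν)))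
        ≤ eInt μ (fun s => -(ENNReal.log (∫⁻ x, expNeg (f s x) ∂ν))) + (ε : EReal) := by
  classical
  set L : Ω → ℝ≥0∞ := (fun s => ∫⁻ x, expNeg (f s x) ∂ν) with hLdef
  have hLmeas : Measurable L := by
    apply Measurable.lintegral_prod_right' (f := fun p : Ω × EuclideanSpace ℝ (Fin n) =>
      expNeg (f p.1 p.2))
    exact measurable_expNeg.comp hf
  set Lb : ℕ → Ω → ℝ≥0∞ := fun j s =>
    ∫⁻ x in Metric.closedBall (0 : EuclideanSpace ℝ (Fin n)) j, expNeg (f s x) ∂ν with hLbdef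
  have hLbmeas : ∀ j, Measurable (Lb j) := by
    intro j
    have heq : Lb j = fun s => ∫⁻ x, (Metric.closedBall (0 : EuclideanSpace ℝ (Fin n))
        (j:ℝ)).indicator (fun x => expNeg (f s x)) x ∂ν := by
      funext s
      rw [lintegral_indicator measurableSet_closedBall]
    rw [heq]
    apply Measurable.lintegral_prod_right' (f := fun p : Ω × EuclideanSpace ℝ (Fin n) =>
      (Metric.closedBall (0 : EuclideanSpace ℝ (Fin n)) (j:ℝ)).indicator
        (fun x => expNeg (f p.1 p.2)) p.2)
    simp_rw [Set.indicator_apply]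
    exact Measurable.ite (measurable_snd measurableSet_closedBall)
      (measurable_expNeg.comp hf) measurable_const
  have hLb_mono : ∀ s, Monotone (fun j => Lb j s) := by
    intro s j j' h
    exact lintegral_mono_set (Metric.closedBall_subset_closedBall (by exact_mod_cast h))
  have hsup : ∀ s, (⨆ j, Lb j s) = L s := by
    intro s
    have hiU : (⋃ j : ℕ, Metric.closedBall (0 : EuclideanSpace ℝ (Fin n)) (j:ℝ)) = univ := by
      refine eq_univ_of_forall fun x => ?_
      exact mem_iUnion.2 ⟨⌈‖x‖⌉₊, by
        simpa [mem_closedBall_zero_iff] using Nat.le_ceil ‖x‖⟩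
    have hmonoB : Monotone fun j : ℕ => Metric.closedBall (0 : EuclideanSpace ℝ (Fin n)) (j:ℝ) :=
      fun j j' h => Metric.closedBall_subset_closedBall (by exact_mod_cast h)
    have key := hmonoB.measure_iUnion (μ := ν.withDensity fun x => expNeg (f s x))
    rw [hiU] at key
    calc (⨆ j, Lb j s)
        = ⨆ j : ℕ, (ν.withDensity fun x => expNeg (f s x))
            (Metric.closedBall (0 : EuclideanSpace ℝ (Fin n)) (j:ℝ)) :=
          iSup_congr fun j => (withDensity_apply _ measurableSet_closedBall).symm
      _ = (ν.withDensity fun x => expNeg (f s x)) univ := key.symm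
      _ = L s := by rw [withDensity_apply _ MeasurableSet.univ, setLIntegral_univ]
  -- numeric setup
  set M : ℝ := (μ univ).toReal with hMdef
  have hM0 : 0 ≤ M := ENNReal.toReal_nonneg
  set ε' : ℝ := min (1/2) (ε / (2*(M+2)+1)) with hε'def
  have hε'pos : 0 < ε' := lt_min (by norm_num) (div_pos hε (by linarith))
  have hε'half : ε' ≤ 1/2 := min_le_left _ _
  have hε'key : ε' * (2*(M+2)+1) ≤ ε := by
    have h1 : ε' ≤ ε / (2*(M+2)+1) := min_le_right _ _
    have hd : (0:ℝ) < 2*(M+2)+1 := by linarith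
    calc ε' * (2*(M+2)+1) ≤ (ε / (2*(M+2)+1)) * (2*(M+2)+1) :=
          mul_le_mul_of_nonneg_right h1 hd.le
      _ = ε := div_mul_cancel₀ _ hd.ne'
  set cExp : ℝ≥0∞ := ENNReal.ofReal (Real.exp ε') with hcExpdef
  have hcExp1 : 1 < cExp := by
    rw [hcExpdef, ← ENNReal.ofReal_one]
    exact (ENNReal.ofReal_lt_ofReal_iff (Real.exp_pos _)).2 (Real.one_lt_exp_iff.2 hε'pos)
  have hcExp0 : cExp ≠ 0 := (lt_trans zero_lt_one hcExp1).ne'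
  have hcExpT : cExp ≠ ⊤ := ENNReal.ofReal_ne_top
  -- bad sets
  set Abar : ℕ → Set Ω := fun j => {s | cExp * Lb j s < L s} with hAbardef
  have hAbarm : ∀ j, MeasurableSet (Abar j) :=
    fun j => measurableSet_lt (measurable_const.mul (hLbmeas j)) hLmeas
  have hAbaranti : Antitone Abar := by
    intro j j' h s hs
    exact lt_of_le_of_lt (mul_le_mul_right (hLb_mono s h) cExp) hs
  have hgoodj : ∀ s, L s ≠ 0 → L s ≠ ⊤ → ∃ j, L s ≤ cExp * Lb j s := by
    intro s h0 ht
    have hlt : cExp⁻¹ * L s < L s := by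
      have hinv : cExp⁻¹ < 1 := ENNReal.inv_lt_one.2 hcExp1
      calc cExp⁻¹ * L s < 1 * L s := ENNReal.mul_lt_mul_left h0 ht hinv
        _ = L s := one_mul _
    rw [← hsup s] at hlt
    obtain ⟨j, hj⟩ := lt_iSup_iff.1 hlt
    refine ⟨j, ?_⟩
    have h2 := mul_le_mul_right hj.le cExp
    rw [← mul_assoc, ENNReal.mul_inv_cancel hcExp0 hcExpT, one_mul] at h2
    rwa [hsup s] at h2
  have htend0 : Tendsto (fun j => μ (Abar j)) atTop (nhds 0) := by
    have hnull : μ (⋂ j, Abar j) = 0 := by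
      refine measure_mono_null (fun s hs => ?_) (ae_iff.1 hfin)
      simp only [mem_setOf_eq, not_and_or, not_not]
      by_contra hcon
      push_neg at hcon
      obtain ⟨hT, hB⟩ := hcon
      have h0 : L s ≠ 0 := by
        intro h; exact hB (by rw [ENNReal.log_eq_bot_iff]; exact h)
      have hTop : L s ≠ ⊤ := by
        intro h; exact hT (by rw [ENNReal.log_eq_top_iff]; exact h)
      obtain ⟨j, hj⟩ := hgoodj s h0 hTop
      have := mem_iInter.1 hs j
      rw [hAbardef] at this
      exact absurd hj (not_le.2 this)
    have h := tendsto_measure_iInter_atTop (fun j => (hAbarm j).nullMeasurableSet)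
      hAbaranti ⟨0, measure_ne_top μ _⟩
    rw [hnull] at h
    exact h
  have hrex : ∀ m : ℕ, ∃ j, μ (Abar j) ≤ 2⁻¹ ^ m := by
    intro m
    have hpos : (0:ℝ≥0∞) < 2⁻¹ ^ m :=
      ENNReal.pow_pos (ENNReal.inv_pos.2 ENNReal.ofNat_ne_top) m
    exact ((ENNReal.tendsto_nhds_zero.1 htend0) _ hpos).exists
  choose r hr using hrex
  -- radii
  set ρ : ℕ → ℕ := fun m => Nat.rec (max (r 0) 1) (fun k ih => max (r (k+1)) (ih+1)) m with hρdef
  have hρ0 : ρ 0 = max (r 0) 1 := rfl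
  have hρs : ∀ m, ρ (m+1) = max (r (m+1)) (ρ m + 1) := fun m => rfl
  have hρ1 : ∀ m, m + 1 ≤ ρ m := by
    intro m
    induction m with
    | zero => rw [hρ0]; exact le_trans (by norm_num) (le_max_right _ _)
    | succ k ih =>
        rw [hρs]
        have := le_max_right (r (k+1)) (ρ k + 1)
        omega
  have hρmono : Monotone ρ := by
    apply monotone_nat_of_le_succ
    intro m
    rw [hρs]
    have := le_max_right (r (m+1)) (ρ m + 1)
    omega
  have hρr : ∀ m, r m ≤ ρ m := by
    intro m
    cases m with
    | zero => rw [hρ0]; exact le_max_left _ _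
    | succ k => rw [hρs]; exact le_max_left _ _
  set A : ℕ → Set Ω := fun m => Abar (ρ m) with hAdef
  have hAmeas : ∀ m, MeasurableSet (A m) := fun m => hAbarm (ρ m)
  have hAle : ∀ m, μ (A m) ≤ 2⁻¹ ^ m :=
    fun m => le_trans (measure_mono (hAbaranti (hρr m))) (hr m)
  -- counting function and penalty bound H
  set cnt : Ω → ℝ≥0∞ := fun s => ∑' m, (A m).indicator (1 : Ω → ℝ≥0∞) s with hcntdef
  set H : Ω → ℝ≥0∞ := fun s => ENNReal.ofReal ε' * (cnt s + 1) with hHdef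
  have hcntmeas : Measurable cnt :=
    Measurable.ennreal_tsum fun m => measurable_const.indicator (hAmeas m)
  have hHmeas : Measurable H := (hcntmeas.add measurable_const).const_mul _
  have hδle : ∫⁻ s, H s ∂μ ≤ ENNReal.ofReal ε' * (2 + μ univ) := by
    rw [hHdef]
    rw [lintegral_const_mul' _ _ ENNReal.ofReal_ne_top]
    refine mul_le_mul_right ?_ _
    rw [lintegral_add_right _ measurable_const, lintegral_one]
    refine add_le_add_left ?_ _
    have hts : ∫⁻ s, cnt s ∂μ = ∑' m, ∫⁻ s, (A m).indicator (1 : Ω → ℝ≥0∞) s ∂μ :=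
      lintegral_tsum (fun m => (measurable_const.indicator (hAmeas m)).aemeasurable)
    calc ∫⁻ s, cnt s ∂μ
        = ∑' m, ∫⁻ s, (A m).indicator (1 : Ω → ℝ≥0∞) s ∂μ := hts
      _ = ∑' m, μ (A m) := by
          refine tsum_congr fun m => ?_
          rw [lintegral_indicator_one (hAmeas m)]
      _ ≤ ∑' m : ℕ, (2:ℝ≥0∞)⁻¹ ^ m := ENNReal.tsum_le_tsum hAle
      _ = 2 := by
          rw [ENNReal.tsum_geometric, ENNReal.one_sub_inv_two, inv_inv]
  have hδT : ∫⁻ s, H s ∂μ ≠ ⊤ :=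
    ne_top_of_le_ne_top (ENNReal.mul_ne_top ENNReal.ofReal_ne_top
      (ENNReal.add_ne_top.2 ⟨ENNReal.ofNat_ne_top, measure_ne_top μ _⟩)) hδle
  -- the penalty function
  set ψ : EuclideanSpace ℝ (Fin n) → ℝ := fun x => ε' * stair ρ ‖x‖ with hψdef
  have hψcont : Continuous ψ := continuous_const.mul ((stair_continuous hρ1).comp continuous_norm)
  have hψnonneg : ∀ x, 0 ≤ ψ x := fun x => mul_nonneg hε'pos.le (stair_nonneg hρ1 _)
  have hψsq : ∀ x, ψ x ≤ ‖x‖ ^ 2 := by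
    intro x
    rcases le_or_gt ‖x‖ 1 with h1 | h1
    · have h0' : (1:ℝ) ≤ (ρ 0 : ℝ) := by exact_mod_cast hρ1 0
      have hz : stair ρ ‖x‖ ≤ 0 := by
        have h0 := stair_le hρmono (m := 0) (r := ‖x‖) (by linarith)
        simpa using h0
      have h2 : ψ x ≤ 0 := mul_nonpos_of_nonneg_of_nonpos hε'pos.le hz
      have h3 : (0:ℝ) ≤ ‖x‖ ^ 2 := sq_nonneg _
      linarith
    · have hceil : stair ρ ‖x‖ ≤ ⌈‖x‖⌉₊ := stair_le_ceil hρ1 _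
      have hceil2 : (⌈‖x‖⌉₊ : ℝ) < ‖x‖ + 1 := Nat.ceil_lt_add_one (norm_nonneg x)
      have hst : stair ρ ‖x‖ ≤ 2 * ‖x‖ := by
        have : ‖x‖ + 1 ≤ 2 * ‖x‖ := by linarith
        linarith
      have hsq2 : 2 * ‖x‖ ≤ 2 * ‖x‖ ^ 2 := by nlinarith
      calc ψ x = ε' * stair ρ ‖x‖ := rfl
        _ ≤ (1/2) * (2 * ‖x‖ ^ 2) :=
            mul_le_mul hε'half (le_trans hst hsq2) (stair_nonneg hρ1 _) (by norm_num)
        _ = ‖x‖ ^ 2 := by ring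
  have hψtend : Tendsto ψ (cocompact (EuclideanSpace ℝ (Fin n))) atTop := by
    have h1 : Tendsto (fun x : EuclideanSpace ℝ (Fin n) => stair ρ ‖x‖)
        (cocompact (EuclideanSpace ℝ (Fin n))) atTop :=
      (stair_tendsto hρ1 hρmono).comp tendsto_norm_cocompact_atTop
    exact Tendsto.const_mul_atTop hε'pos h1
  refine ⟨ψ, hψcont, hψnonneg, hψsq, hψtend, ?_⟩
  simp only [eInt, neg_neg]
  set Lψ : Ω → ℝ≥0∞ := fun s => ∫⁻ x, expNeg (f s x + ((ψ x : ℝ) : EReal)) ∂ν with hLψdef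
  have hLψmeas : Measurable Lψ := by
    have heq : (fun p : Ω × EuclideanSpace ℝ (Fin n) => expNeg (f p.1 p.2 + ((ψ p.2 : ℝ) : EReal)))
        = fun p => if f p.1 p.2 = ⊤ then 0 else if f p.1 p.2 = ⊥ then 1
            else ENNReal.ofReal (Real.exp (-((f p.1 p.2).toReal + ψ p.2))) := by
      funext p
      exact expNeg_add_real _ _
    apply Measurable.lintegral_prod_right' (f := fun p : Ω × EuclideanSpace ℝ (Fin n) =>
      expNeg (f p.1 p.2 + ((ψ p.2 : ℝ) : EReal)))
    rw [heq]
    refine Measurable.ite (hf (measurableSet_singleton ⊤)) measurable_const ?_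
    refine Measurable.ite (hf (measurableSet_singleton ⊥)) measurable_const ?_
    exact ENNReal.measurable_ofReal.comp (Real.measurable_exp.comp
      (((measurable_ereal_toReal.comp hf).add
        ((hψcont.measurable).comp measurable_snd)).neg))
  have hLψle : ∀ s, Lψ s ≤ L s := fun s => lintegral_mono fun x => expNeg_anti_add (hψnonneg x)
  -- pointwise key estimate
  have hmain : ∀ᵐ s ∂μ, ∃ a b : ℝ, ENNReal.log (Lψ s) = (a : EReal) ∧
      ENNReal.log (L s) = (b : EReal) ∧ a ≤ b ∧
      ENNReal.ofReal (-a) ≤ ENNReal.ofReal (-b) + H s ∧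
      ENNReal.ofReal b ≤ ENNReal.ofReal a + H s := by
    filter_upwards [hfin] with s hs
    obtain ⟨hsT, hsB⟩ := hs
    have hL0 : L s ≠ 0 := fun h => hsB (by rw [ENNReal.log_eq_bot_iff]; exact h)
    have hLt : L s ≠ ⊤ := fun h => hsT (by rw [ENNReal.log_eq_top_iff]; exact h)
    obtain ⟨j, hj⟩ := hgoodj s hL0 hLt
    have hjρ : j ≤ ρ j := le_trans (Nat.le_succ j) (hρ1 j)
    have hex : ∃ m, L s ≤ cExp * Lb (ρ m) s :=
      ⟨j, le_trans hj (mul_le_mul_right (hLb_mono s hjρ) _)⟩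
    set m₀ := Nat.find hex with hm₀def
    have hm₀ : L s ≤ cExp * Lb (ρ m₀) s := Nat.find_spec hex
    have hless : ∀ m, m < m₀ → s ∈ A m := by
      intro m hm
      have h1 := Nat.find_min hex hm
      have h2 : ¬ (L s ≤ cExp * Lb (ρ m) s) := h1
      rw [hAdef]
      exact not_le.1 h2
    have hlow : ENNReal.ofReal (Real.exp (-(ε' * m₀))) * Lb (ρ m₀) s ≤ Lψ s := by
      calc ENNReal.ofReal (Real.exp (-(ε' * m₀))) * Lb (ρ m₀) s
          = ∫⁻ x in Metric.closedBall (0 : EuclideanSpace ℝ (Fin n)) ((ρ m₀ : ℕ) : ℝ),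
              ENNReal.ofReal (Real.exp (-(ε' * m₀))) * expNeg (f s x) ∂ν :=
            (lintegral_const_mul' _ _ ENNReal.ofReal_ne_top).symm
        _ ≤ ∫⁻ x in Metric.closedBall (0 : EuclideanSpace ℝ (Fin n)) ((ρ m₀ : ℕ) : ℝ),
              expNeg (f s x + ((ψ x : ℝ) : EReal)) ∂ν := by
            refine setLIntegral_mono' measurableSet_closedBall (fun x hx => ?_)
            refine le_expNeg_add (hψnonneg x) ?_
            have hxball : ‖x‖ ≤ ((ρ m₀ : ℕ) : ℝ) := by
              simpa [mem_closedBall_zero_iff] using hx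
            have hstle : stair ρ ‖x‖ ≤ (m₀ : ℝ) := stair_le hρmono hxball
            calc ψ x = ε' * stair ρ ‖x‖ := rfl
              _ ≤ ε' * m₀ := mul_le_mul_of_nonneg_left hstle hε'pos.le
        _ ≤ Lψ s := setLIntegral_le_lintegral _ _
    have hchain : L s ≤ ENNReal.ofReal (Real.exp (ε' * (m₀ + 1))) * Lψ s := by
      have hone : ENNReal.ofReal (Real.exp (ε' * m₀)) * ENNReal.ofReal (Real.exp (-(ε' * m₀)))
          = 1 := by
        rw [← ENNReal.ofReal_mul (Real.exp_pos _).le, ← Real.exp_add]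
        simp
      calc L s ≤ cExp * Lb (ρ m₀) s := hm₀
        _ = cExp * (ENNReal.ofReal (Real.exp (ε' * m₀)) *
            (ENNReal.ofReal (Real.exp (-(ε' * m₀))) * Lb (ρ m₀) s)) := by
            rw [← mul_assoc (ENNReal.ofReal (Real.exp (ε' * m₀))), hone, one_mul]
        _ ≤ cExp * (ENNReal.ofReal (Real.exp (ε' * m₀)) * Lψ s) := by gcongr
        _ = ENNReal.ofReal (Real.exp (ε' * (m₀ + 1))) * Lψ s := by
            rw [← mul_assoc, hcExpdef, ← ENNReal.ofReal_mul (Real.exp_pos _).le, ← Real.exp_add]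
            ring_nf
    have hψ0 : Lψ s ≠ 0 := by
      intro h
      rw [h, mul_zero] at hchain
      exact hL0 (le_antisymm hchain zero_le)
    have hψT : Lψ s ≠ ⊤ := ne_top_of_le_ne_top hLt (hLψle s)
    have hlogψT : ENNReal.log (Lψ s) ≠ ⊤ := by
      rw [Ne, ENNReal.log_eq_top_iff]; exact hψT
    have hlogψB : ENNReal.log (Lψ s) ≠ ⊥ := by
      rw [Ne, ENNReal.log_eq_bot_iff]; exact hψ0
    refine ⟨(ENNReal.log (Lψ s)).toReal, (ENNReal.log (L s)).toReal,
      (EReal.coe_toReal hlogψT hlogψB).symm, (EReal.coe_toReal hsT hsB).symm, ?_, ?_, ?_⟩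
    · exact EReal.toReal_le_toReal (ENNReal.log_monotone (hLψle s)) hlogψB hsT
    all_goals {
      have hba : (ENNReal.log (L s)).toReal ≤ ε' * (m₀ + 1) + (ENNReal.log (Lψ s)).toReal := by
        have h1 : ENNReal.log (L s) ≤
            ENNReal.log (ENNReal.ofReal (Real.exp (ε' * (m₀ + 1))) * Lψ s) :=
          ENNReal.log_monotone hchain
        rw [ENNReal.log_mul_add, ENNReal.log_ofReal_of_pos (Real.exp_pos _), Real.log_exp] at h1
        rw [← EReal.coe_toReal hsT hsB, ← EReal.coe_toReal hlogψT hlogψB] at h1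
        rw [← EReal.coe_add] at h1
        exact_mod_cast h1
      have hHge : ENNReal.ofReal (ε' * (m₀ + 1)) ≤ H s := by
        have hcnt : (m₀ : ℝ≥0∞) ≤ cnt s := by
          have hsum : ∑ m ∈ Finset.range m₀, (A m).indicator (1 : Ω → ℝ≥0∞) s ≤ cnt s :=
            ENNReal.sum_le_tsum _
          calc (m₀ : ℝ≥0∞) = ∑ m ∈ Finset.range m₀, 1 := by simp
            _ = ∑ m ∈ Finset.range m₀, (A m).indicator (1 : Ω → ℝ≥0∞) s := by
              refine Finset.sum_congr rfl fun m hm => ?_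
              rw [Set.indicator_of_mem (hless m (Finset.mem_range.1 hm))]
              rfl
            _ ≤ cnt s := hsum
        calc ENNReal.ofReal (ε' * (m₀ + 1))
            = ENNReal.ofReal ε' * ENNReal.ofReal ((m₀ : ℝ) + 1) := ENNReal.ofReal_mul hε'pos.le
          _ = ENNReal.ofReal ε' * ((m₀ : ℝ≥0∞) + 1) := by
              rw [ENNReal.ofReal_add (Nat.cast_nonneg _) zero_le_one, ENNReal.ofReal_natCast,
                ENNReal.ofReal_one]
          _ ≤ ENNReal.ofReal ε' * (cnt s + 1) := by gcongr
          _ = H s := rfl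
      first
      | calc ENNReal.ofReal (-(ENNReal.log (Lψ s)).toReal)
            ≤ ENNReal.ofReal (-(ENNReal.log (L s)).toReal + ε' * (m₀ + 1)) :=
              ENNReal.ofReal_le_ofReal (by linarith)
          _ ≤ ENNReal.ofReal (-(ENNReal.log (L s)).toReal) + ENNReal.ofReal (ε' * (m₀ + 1)) :=
              ENNReal.ofReal_add_le
          _ ≤ ENNReal.ofReal (-(ENNReal.log (L s)).toReal) + H s := add_le_add_right hHge _
      | calc ENNReal.ofReal ((ENNReal.log (L s)).toReal)
            ≤ ENNReal.ofReal ((ENNReal.log (Lψ s)).toReal + ε' * (m₀ + 1)) :=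
              ENNReal.ofReal_le_ofReal (by linarith)
          _ ≤ ENNReal.ofReal ((ENNReal.log (Lψ s)).toReal) + ENNReal.ofReal (ε' * (m₀ + 1)) :=
              ENNReal.ofReal_add_le
          _ ≤ ENNReal.ofReal ((ENNReal.log (Lψ s)).toReal) + H s := add_le_add_right hHge _
    }
  set PG := ∫⁻ s, erealPos (-(ENNReal.log (Lψ s))) ∂μ with hPGdef
  set NG := ∫⁻ s, erealPos (ENNReal.log (Lψ s)) ∂μ with hNGdef
  set PF := ∫⁻ s, erealPos (-(ENNReal.log (L s))) ∂μ with hPFdef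
  set NF := ∫⁻ s, erealPos (ENNReal.log (L s)) ∂μ with hNFdef
  set dd := ∫⁻ s, H s ∂μ with hdddef
  have hPFmeas : Measurable fun s => erealPos (-(ENNReal.log (L s))) :=
    measurable_erealPos.comp (measurable_ereal_neg.comp (measurable_ennreal_log.comp hLmeas))
  have hNGmeas : Measurable fun s => erealPos (ENNReal.log (Lψ s)) :=
    measurable_erealPos.comp (measurable_ennreal_log.comp hLψmeas)
  have hPG : PG ≤ PF + dd := by
    calc PG ≤ ∫⁻ s, (erealPos (-(ENNReal.log (L s))) + H s) ∂μ := by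
          refine lintegral_mono_ae ?_
          filter_upwards [hmain] with s hs
          obtain ⟨a, b, ha, hb, hab, h1, h2⟩ := hs
          rw [ha, hb, ← EReal.coe_neg, ← EReal.coe_neg, erealPos_coe, erealPos_coe]
          exact h1
      _ = PF + dd := lintegral_add_left hPFmeas _
  have hNF : NF ≤ NG + dd := by
    calc NF ≤ ∫⁻ s, (erealPos (ENNReal.log (Lψ s)) + H s) ∂μ := by
          refine lintegral_mono_ae ?_
          filter_upwards [hmain] with s hs
          obtain ⟨a, b, ha, hb, hab, h1, h2⟩ := hs
          rw [ha, hb, erealPos_coe, erealPos_coe]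
          exact h2
      _ = NG + dd := lintegral_add_left hNGmeas _
  have hNG : NG ≤ NF := by
    refine lintegral_mono_ae ?_
    filter_upwards [hmain] with s hs
    obtain ⟨a, b, ha, hb, hab, h1, h2⟩ := hs
    rw [ha, hb, erealPos_coe, erealPos_coe]
    exact ENNReal.ofReal_le_ofReal hab
  have hPFfin : PF ≠ ⊤ := by
    have hle : PF ≤ ∫⁻ s, ‖(ENNReal.log (L s)).toReal‖₊ ∂μ := by
      refine lintegral_mono_ae ?_
      filter_upwards [hmain] with s hs
      obtain ⟨a, b, ha, hb, hab, h1, h2⟩ := hs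
      rw [hb, ← EReal.coe_neg, erealPos_coe, EReal.toReal_coe, ← enorm_eq_nnnorm, Real.enorm_eq_ofReal_abs]
      exact ENNReal.ofReal_le_ofReal (neg_le_abs b)
    exact ne_top_of_le_ne_top hint.2.ne hle
  have hNFfin : NF ≠ ⊤ := by
    have hle : NF ≤ ∫⁻ s, ‖(ENNReal.log (L s)).toReal‖₊ ∂μ := by
      refine lintegral_mono_ae ?_
      filter_upwards [hmain] with s hs
      obtain ⟨a, b, ha, hb, hab, h1, h2⟩ := hs
      rw [hb, erealPos_coe, EReal.toReal_coe, ← enorm_eq_nnnorm, Real.enorm_eq_ofReal_abs]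
      exact ENNReal.ofReal_le_ofReal (le_abs_self b)
    exact ne_top_of_le_ne_top hint.2.ne hle
  have hPGfin : PG ≠ ⊤ := ne_top_of_le_ne_top (ENNReal.add_ne_top.2 ⟨hPFfin, hδT⟩) hPG
  have hNGfin : NG ≠ ⊤ := ne_top_of_le_ne_top hNFfin hNG
  have hcoe : ∀ x : ℝ≥0∞, x ≠ ⊤ → (x : EReal) = ((x.toReal : ℝ) : EReal) := by
    intro x hx
    rw [← EReal.coe_toReal (x := (x : EReal)) (by simpa [EReal.coe_ennreal_eq_top_iff] using hx)
      (EReal.coe_ennreal_ne_bot x), EReal.toReal_coe_ennreal]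
  rw [hcoe PG hPGfin, hcoe NG hNGfin, hcoe PF hPFfin, hcoe NF hNFfin,
    ← EReal.coe_sub, ← EReal.coe_sub, ← EReal.coe_add, EReal.coe_le_coe_iff]
  have hd1 : PG.toReal ≤ PF.toReal + dd.toReal := by
    have h := ENNReal.toReal_mono (ENNReal.add_ne_top.2 ⟨hPFfin, hδT⟩) hPG
    rwa [ENNReal.toReal_add hPFfin hδT] at h
  have hd2 : NF.toReal ≤ NG.toReal + dd.toReal := by
    have h := ENNReal.toReal_mono (ENNReal.add_ne_top.2 ⟨hNGfin, hδT⟩) hNF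
    rwa [ENNReal.toReal_add hNGfin hδT] at h
  have hd3 : dd.toReal ≤ ε' * (2 + M) := by
    have hfin2 : ENNReal.ofReal ε' * (2 + μ univ) ≠ ⊤ :=
      ENNReal.mul_ne_top ENNReal.ofReal_ne_top
        (ENNReal.add_ne_top.2 ⟨ENNReal.ofNat_ne_top, measure_ne_top μ _⟩)
    have h := ENNReal.toReal_mono hfin2 hδle
    rwa [ENNReal.toReal_mul, ENNReal.toReal_ofReal hε'pos.le,
      ENNReal.toReal_add ENNReal.ofNat_ne_top (measure_ne_top μ _), ENNReal.toReal_ofNat] at h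
  have h2d : 2 * (ε' * (2 + M)) ≤ ε := by nlinarith
  linarith
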